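/- Let 𝒮 denote the space of rapidly decreasing ℤ-indexed complex sequences with its dual 𝒮*. Every continuous positive-semidefinite sesquilinear form on 𝒮* that is invariant under the circle action R_λ e_p = λ^{-p} e_p (for all λ ∈ S¹) and under the involution ι e_p = e_{-p} is of the form ⟨b, c⟩ = Σ_p b^p · conj(c^p) · a_p for a unique nonnegative rapidly decreasing sequence (a_p) with a_p = a_{-p}; moreover this assignment is a bijection of cones, with positive definite forms corresponding exactly to strictly positive sequences. -/

import Mathlib

/-- Polynomial growth: the model for elements of `𝒮*`, the dual of the space of rapidly
decreasing `ℤ`-indexed sequences. -/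
def PolyGrowth (b : ℤ → ℂ) : Prop :=
  ∃ (m : ℕ) (C : ℝ), ∀ p : ℤ, ‖b p‖ ≤ C * (|(p : ℝ)| + 1) ^ m

/-- Rapidly decreasing sequences. -/
def RapidDecay (a : ℤ → ℝ) : Prop :=
  ∀ k : ℕ, ∃ C : ℝ, ∀ p : ℤ, |a p| * (|(p : ℝ)| + 1) ^ k ≤ C

namespace Stmt11Aux

open Complex Filter Finset

lemma one_le_x (p : ℤ) : (1:ℝ) ≤ |(p:ℝ)| + 1 := by
  have := abs_nonneg ((p:ℝ)); linarith

noncomputable def ep (p : ℤ) : ℤ → ℂ := fun q => if q = p then 1 else 0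

lemma pg_ep (p : ℤ) : PolyGrowth (ep p) := by
  refine ⟨0, 1, fun q => ?_⟩
  by_cases h : q = p <;> simp [ep, h]

lemma pg_zero : PolyGrowth 0 := ⟨0, 0, by simp⟩

lemma pg_smul {b : ℤ → ℂ} (t : ℂ) (hb : PolyGrowth b) : PolyGrowth (t • b) := by
  obtain ⟨m, C, hC⟩ := hb
  refine ⟨m, ‖t‖ * C, fun p => ?_⟩
  simp only [Pi.smul_apply, smul_eq_mul, norm_mul, mul_assoc]
  exact mul_le_mul_of_nonneg_left (hC p) (norm_nonneg t)

lemma pg_of_le {b b' : ℤ → ℂ} (h : ∀ p, ‖b' p‖ ≤ ‖b p‖) (hb : PolyGrowth b) :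
    PolyGrowth b' := by
  obtain ⟨m, C, hC⟩ := hb
  exact ⟨m, C, fun p => (h p).trans (hC p)⟩

lemma pg_add {b b' : ℤ → ℂ} (hb : PolyGrowth b) (hb' : PolyGrowth b') :
    PolyGrowth (b + b') := by
  obtain ⟨m, C, hC⟩ := hb
  obtain ⟨m', C', hC'⟩ := hb'
  refine ⟨m + m', max C 0 + max C' 0, fun p => ?_⟩
  have hx : (1:ℝ) ≤ |(p:ℝ)| + 1 := one_le_x p
  have hxm : (|(p:ℝ)|+1) ^ m ≤ (|(p:ℝ)|+1) ^ (m+m') :=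
    pow_le_pow_right₀ hx (Nat.le_add_right _ _)
  have hxm' : (|(p:ℝ)|+1) ^ m' ≤ (|(p:ℝ)|+1) ^ (m+m') :=
    pow_le_pow_right₀ hx (Nat.le_add_left _ _)
  calc ‖(b + b') p‖ ≤ ‖b p‖ + ‖b' p‖ := norm_add_le _ _
    _ ≤ C * (|(p:ℝ)|+1) ^ m + C' * (|(p:ℝ)|+1) ^ m' := add_le_add (hC p) (hC' p)
    _ ≤ max C 0 * (|(p:ℝ)|+1) ^ (m+m') + max C' 0 * (|(p:ℝ)|+1) ^ (m+m') := by
        apply add_le_add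
        · exact (mul_le_mul_of_nonneg_right (le_max_left _ _) (by positivity)).trans
            (mul_le_mul_of_nonneg_left hxm (le_max_right _ _))
        · exact (mul_le_mul_of_nonneg_right (le_max_left _ _) (by positivity)).trans
            (mul_le_mul_of_nonneg_left hxm' (le_max_right _ _))
    _ = (max C 0 + max C' 0) * (|(p:ℝ)|+1) ^ (m+m') := by ring

lemma pg_sum {s : Finset ℤ} {f : ℤ → ℤ → ℂ} (hf : ∀ i, PolyGrowth (f i)) :
    PolyGrowth (∑ i ∈ s, f i) := by
  classical
  induction s using Finset.induction with
  | empty => simpa using pg_zero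
  | insert _ _ hnot ih => rw [Finset.sum_insert hnot]; exact pg_add (hf _) ih

lemma pg_up {b : ℤ → ℂ} {m : ℕ} {C : ℝ} (h : ∀ p, ‖b p‖ ≤ C * (|(p:ℝ)|+1) ^ m)
    {m' : ℕ} {C' : ℝ} (hm : m ≤ m') (hC : max C 0 ≤ C') :
    ∀ p, ‖b p‖ ≤ C' * (|(p:ℝ)|+1) ^ m' := by
  intro p
  have hx : (1:ℝ) ≤ |(p:ℝ)| + 1 := one_le_x p
  calc ‖b p‖ ≤ C * (|(p:ℝ)|+1) ^ m := h p
    _ ≤ max C 0 * (|(p:ℝ)|+1) ^ m :=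
        mul_le_mul_of_nonneg_right (le_max_left _ _) (by positivity)
    _ ≤ C' * (|(p:ℝ)|+1) ^ m' :=
        mul_le_mul hC (pow_le_pow_right₀ hx hm) (by positivity)
          (le_trans (le_max_right _ _) hC)

lemma summable_inv_sq : Summable (fun p : ℤ => ((|(p:ℝ)| + 1) ^ 2)⁻¹) := by
  have h2 : Summable (fun n : ℕ => (((n:ℝ)) ^ 2)⁻¹) :=
    Real.summable_nat_pow_inv.mpr one_lt_two
  have hnat : Summable (fun n : ℕ => (((n:ℝ) + 1) ^ 2)⁻¹) := by
    have := (summable_nat_add_iff (f := fun n : ℕ => (((n:ℝ)) ^ 2)⁻¹) 1).mpr h2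
    exact this.congr (by intro n; push_cast; ring_nf)
  apply Summable.of_nat_of_neg
  · exact hnat.congr (by intro n; norm_num)
  · exact hnat.congr (by intro n; push_cast; simp [abs_of_nonneg (Nat.cast_nonneg (α := ℝ) n)])

/-- truncation -/
noncomputable def trunc (b : ℤ → ℂ) (N : ℕ) : ℤ → ℂ :=
  fun p => if |p| ≤ (N:ℤ) then b p else 0

noncomputable def rest (b : ℤ → ℂ) (N : ℕ) : ℤ → ℂ :=
  fun p => if |p| ≤ (N:ℤ) then 0 else b p

lemma trunc_add_rest (b : ℤ → ℂ) (N : ℕ) : trunc b N + rest b N = b := by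
  funext p
  by_cases h : |p| ≤ (N:ℤ) <;> simp [trunc, rest, h]

lemma trunc_le (b : ℤ → ℂ) (N : ℕ) (p : ℤ) : ‖trunc b N p‖ ≤ ‖b p‖ := by
  by_cases h : |p| ≤ (N:ℤ) <;> simp [trunc, h]

lemma rest_le (b : ℤ → ℂ) (N : ℕ) (p : ℤ) : ‖rest b N p‖ ≤ ‖b p‖ := by
  by_cases h : |p| ≤ (N:ℤ) <;> simp [rest, h]

lemma trunc_eq_sum (b : ℤ → ℂ) (N : ℕ) :
    trunc b N = ∑ q ∈ Finset.Icc (-(N:ℤ)) N, b q • ep q := by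
  classical
  funext p
  rw [Finset.sum_apply]
  simp only [Pi.smul_apply, smul_eq_mul]
  by_cases h : |p| ≤ (N:ℤ)
  · rw [trunc, if_pos h, Finset.sum_eq_single p]
    · simp [ep]
    · intro q _ hne; simp [ep, Ne.symm hne]
    · intro hnot; exact absurd (Finset.mem_Icc.mpr (abs_le.mp h)) hnot
  · rw [trunc, if_neg h]
    symm
    apply Finset.sum_eq_zero
    intro q hq
    have hne : p ≠ q := by
      rintro rfl; exact h (abs_le.mpr (Finset.mem_Icc.mp hq))
    simp [ep, hne]

lemma tendsto_Icc : Tendsto (fun N : ℕ => Finset.Icc (-(N:ℤ)) N) atTop atTop := by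
  apply tendsto_atTop_finset_of_monotone
  · intro i j hij
    apply Finset.Icc_subset_Icc <;> exact_mod_cast by omega
  · intro x
    exact ⟨x.natAbs, by simp only [Finset.mem_Icc, Int.natCast_natAbs]; exact ⟨neg_abs_le x, le_abs_self x⟩⟩

end Stmt11Aux

open Stmt11Aux Complex Filter Finset Topology

/-- Every continuous positive-semidefinite sesquilinear form on `𝒮*` invariant under the
circle action `R_λ e_p = λ^{-p} e_p` and the involution `ι e_p = e_{-p}` is
`⟨b, c⟩ = Σ_p b^p conj(c^p) a_p` for a unique nonnegative rapidly decreasing symmetric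
sequence `(a_p)`, positive definite forms corresponding to strictly positive sequences. -/
theorem stmt_11 (B : (ℤ → ℂ) → (ℤ → ℂ) → ℂ)
    (hadd1 : ∀ b b' c, PolyGrowth b → PolyGrowth b' → PolyGrowth c →
      B (b + b') c = B b c + B b' c)
    (hsmul1 : ∀ (t : ℂ) (b c : ℤ → ℂ), PolyGrowth b → PolyGrowth c →
      B (t • b) c = t * B b c)
    (hsym : ∀ b c, PolyGrowth b → PolyGrowth c → B c b = (starRingEnd ℂ) (B b c))
    (hpos : ∀ b, PolyGrowth b → 0 ≤ (B b b).re ∧ (B b b).im = 0)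
    (hcont : ∀ m : ℕ, ∃ C : ℝ, ∀ b c : ℤ → ℂ,
      (∀ p, ‖b p‖ ≤ (|(p : ℝ)| + 1) ^ m) → (∀ p, ‖c p‖ ≤ (|(p : ℝ)| + 1) ^ m) →
      ‖B b c‖ ≤ C)
    (hcirc : ∀ u : ℂ, ‖u‖ = 1 → ∀ b c, PolyGrowth b → PolyGrowth c →
      B (fun p => u ^ (-p) * b p) (fun p => u ^ (-p) * c p) = B b c)
    (hinv : ∀ b c, PolyGrowth b → PolyGrowth c →
      B (fun p => b (-p)) (fun p => c (-p)) = B b c) :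
    ∃! a : ℤ → ℝ, RapidDecay a ∧ (∀ p, 0 ≤ a p) ∧ (∀ p, a (-p) = a p) ∧
      (∀ b c, PolyGrowth b → PolyGrowth c →
        B b c = ∑' p : ℤ, b p * (starRingEnd ℂ) (c p) * (a p : ℂ)) ∧
      ((∀ b, PolyGrowth b → b ≠ 0 → 0 < (B b b).re) ↔ ∀ p, 0 < a p) := by
  classical
  -- second slot linearity
  have hzero1 : ∀ c, PolyGrowth c → B 0 c = 0 := by
    intro c hc
    have := hsmul1 0 0 c pg_zero hc
    simpa using this
  have hadd2 : ∀ b c c', PolyGrowth b → PolyGrowth c → PolyGrowth c' →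
      B b (c + c') = B b c + B b c' := by
    intro b c c' hb hc hc'
    rw [hsym (c + c') b (pg_add hc hc') hb, hadd1 c c' b hc hc' hb, map_add,
      ← hsym c b hc hb, ← hsym c' b hc' hb]
  have hsmul2 : ∀ (t : ℂ) (b c : ℤ → ℂ), PolyGrowth b → PolyGrowth c →
      B b (t • c) = (starRingEnd ℂ) t * B b c := by
    intro t b c hb hc
    rw [hsym (t • c) b (pg_smul t hc) hb, hsmul1 t c b hc hb, map_mul, ← hsym c b hc hb]
  have hsum1 : ∀ (s : Finset ℤ) (f : ℤ → ℤ → ℂ) (c : ℤ → ℂ), (∀ i, PolyGrowth (f i)) →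
      PolyGrowth c → B (∑ i ∈ s, f i) c = ∑ i ∈ s, B (f i) c := by
    intro s f c hf hc
    induction s using Finset.induction with
    | empty => simpa using hzero1 c hc
    | insert _ _ hnot ih =>
      rw [Finset.sum_insert hnot, Finset.sum_insert hnot,
        hadd1 _ _ _ (hf _) (pg_sum hf) hc, ih]
  have hsum2 : ∀ (s : Finset ℤ) (f : ℤ → ℤ → ℂ) (b : ℤ → ℂ), (∀ i, PolyGrowth (f i)) →
      PolyGrowth b → B b (∑ i ∈ s, f i) = ∑ i ∈ s, B b (f i) := by
    intro s f b hf hb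
    rw [hsym _ _ (pg_sum hf) hb, hsum1 s f b hf hb, map_sum]
    exact Finset.sum_congr rfl fun i _ => (hsym (f i) b (hf i) hb).symm
  -- the sequence a
  set a : ℤ → ℝ := fun p => (B (ep p) (ep p)).re with ha_def
  have haC : ∀ p, B (ep p) (ep p) = ((a p : ℝ) : ℂ) := by
    intro p
    have h := (hpos (ep p) (pg_ep p)).2
    apply Complex.ext
    · simp [ha_def]
    · simp [h]
  have hanneg : ∀ p, 0 ≤ a p := fun p => (hpos (ep p) (pg_ep p)).1
  -- off diagonal vanishing
  have hoff : ∀ p q : ℤ, p ≠ q → B (ep p) (ep q) = 0 := by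
    intro p q hpq
    have hqp : ((q : ℝ) - (p : ℝ)) ≠ 0 := by
      intro h
      apply hpq
      have : (q:ℝ) = (p:ℝ) := by linarith
      exact_mod_cast this.symm
    set θ : ℝ := Real.pi / ((q : ℝ) - (p : ℝ)) with hθ
    set u : ℂ := Complex.exp ((θ:ℂ) * Complex.I) with hu_def
    have hu : ‖u‖ = 1 := by
      rw [hu_def, Complex.norm_exp_ofReal_mul_I]
    have hune : u ≠ 0 := Complex.exp_ne_zero _
    have hupow : u ^ (q - p) = -1 := by
      rw [hu_def, ← Complex.exp_int_mul]
      have he : ((q - p : ℤ) : ℂ) * ((θ:ℂ) * Complex.I) = (Real.pi : ℂ) * Complex.I := by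
        rw [hθ]
        have h0 : ((q:ℂ) - (p:ℂ)) ≠ 0 := by
          intro h; apply hqp; exact_mod_cast congrArg Complex.re h
        push_cast
        field_simp
      rw [he, Complex.exp_pi_mul_I]
    have key := hcirc u hu (ep p) (ep q) (pg_ep p) (pg_ep q)
    have e1 : (fun r => u ^ (-r) * ep p r) = (u ^ (-p)) • ep p := by
      funext r; by_cases h : r = p <;> simp [ep, h]
    have e2 : (fun r => u ^ (-r) * ep q r) = (u ^ (-q)) • ep q := by
      funext r; by_cases h : r = q <;> simp [ep, h]
    rw [e1, e2, hsmul1 _ _ _ (pg_ep p) (pg_smul _ (pg_ep q)),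
      hsmul2 _ _ _ (pg_ep p) (pg_ep q), ← mul_assoc] at key
    have hcoef : u ^ (-p) * (starRingEnd ℂ) (u ^ (-q)) = -1 := by
      rw [map_zpow₀, ← Complex.inv_eq_conj hu, inv_zpow, ← zpow_neg, neg_neg,
        ← zpow_add₀ hune]
      rw [show -p + q = q - p by ring, hupow]
    rw [hcoef] at key
    linear_combination (-1/2 : ℂ) * key
  -- symmetry
  have hsymm : ∀ p, a (-p) = a p := by
    intro p
    have e : (fun r => ep p (-r)) = ep (-p) := by
      funext r
      simp only [ep]
      by_cases h : r = -p
      · simp [h]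
      · rw [if_neg h, if_neg (by omega)]
    have h := hinv (ep p) (ep p) (pg_ep p) (pg_ep p)
    rw [e] at h
    exact congrArg Complex.re h
  -- quantitative bound
  have hbound : ∀ m : ℕ, ∃ C : ℝ, 0 ≤ C ∧ ∀ (Cb Cc : ℝ) (b c : ℤ → ℂ), 0 < Cb → 0 < Cc →
      PolyGrowth b → PolyGrowth c →
      (∀ p, ‖b p‖ ≤ Cb * (|(p:ℝ)|+1) ^ m) → (∀ p, ‖c p‖ ≤ Cc * (|(p:ℝ)|+1) ^ m) →
      ‖B b c‖ ≤ Cb * Cc * C := by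
    intro m
    obtain ⟨C, hC⟩ := hcont m
    refine ⟨max C 0, le_max_right _ _, ?_⟩
    intro Cb Cc b c hCb hCc hb hc hbb hcc
    set b' : ℤ → ℂ := ((Cb⁻¹ : ℝ) : ℂ) • b with hb'
    set c' : ℤ → ℂ := ((Cc⁻¹ : ℝ) : ℂ) • c with hc'
    have hbeq : b = ((Cb : ℝ) : ℂ) • b' := by
      rw [hb', smul_smul]
      have : ((Cb:ℝ):ℂ) * ((Cb⁻¹:ℝ):ℂ) = 1 := by
        rw [← Complex.ofReal_mul, mul_inv_cancel₀ hCb.ne', Complex.ofReal_one]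
      rw [this, one_smul]
    have hceq : c = ((Cc : ℝ) : ℂ) • c' := by
      rw [hc', smul_smul]
      have : ((Cc:ℝ):ℂ) * ((Cc⁻¹:ℝ):ℂ) = 1 := by
        rw [← Complex.ofReal_mul, mul_inv_cancel₀ hCc.ne', Complex.ofReal_one]
      rw [this, one_smul]
    have hb'b : ∀ p, ‖b' p‖ ≤ (|(p:ℝ)|+1) ^ m := by
      intro p
      rw [hb']
      simp only [Pi.smul_apply, smul_eq_mul, norm_mul, Complex.norm_real,
        Real.norm_eq_abs, _root_.abs_of_pos (inv_pos.mpr hCb)]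
      calc Cb⁻¹ * ‖b p‖ ≤ Cb⁻¹ * (Cb * (|(p:ℝ)|+1) ^ m) :=
            mul_le_mul_of_nonneg_left (hbb p) (by positivity)
        _ = (|(p:ℝ)|+1) ^ m := by field_simp
    have hc'c : ∀ p, ‖c' p‖ ≤ (|(p:ℝ)|+1) ^ m := by
      intro p
      rw [hc']
      simp only [Pi.smul_apply, smul_eq_mul, norm_mul, Complex.norm_real,
        Real.norm_eq_abs, _root_.abs_of_pos (inv_pos.mpr hCc)]
      calc Cc⁻¹ * ‖c p‖ ≤ Cc⁻¹ * (Cc * (|(p:ℝ)|+1) ^ m) :=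
            mul_le_mul_of_nonneg_left (hcc p) (by positivity)
        _ = (|(p:ℝ)|+1) ^ m := by field_simp
    have hpb' : PolyGrowth b' := pg_smul _ hb
    have hpc' : PolyGrowth c' := pg_smul _ hc
    have hval : B b c = ((Cb:ℝ):ℂ) * ((starRingEnd ℂ) ((Cc:ℝ):ℂ) * B b' c') := by
      conv_lhs => rw [hbeq, hceq]
      rw [hsmul1 _ _ _ hpb' (pg_smul _ hpc'), hsmul2 _ _ _ hpb' hpc']
    rw [hval]
    rw [Complex.conj_ofReal]
    rw [norm_mul, norm_mul, Complex.norm_real, Complex.norm_real, Real.norm_eq_abs,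
      Real.norm_eq_abs, _root_.abs_of_pos hCb, _root_.abs_of_pos hCc, mul_assoc]
    apply mul_le_mul_of_nonneg_left _ hCb.le
    apply mul_le_mul_of_nonneg_left _ hCc.le
    exact (hC b' c' hb'b hc'c).trans (le_max_left _ _)
  -- rapid decay
  have hrd : RapidDecay a := by
    intro k
    obtain ⟨C, hC0, hC⟩ := hbound k
    refine ⟨C, fun p => ?_⟩
    set x : ℝ := |(p:ℝ)| + 1 with hx_def
    have hx : (1:ℝ) ≤ x := one_le_x p
    have hxk : (1:ℝ) ≤ x ^ k := one_le_pow₀ hx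
    set b : ℤ → ℂ := ((x ^ k : ℝ) : ℂ) • ep p with hb
    have hbb : ∀ q, ‖b q‖ ≤ 1 * (|(q:ℝ)|+1) ^ k := by
      intro q
      rw [hb]
      by_cases h : q = p
      · subst h
        simp only [Pi.smul_apply, smul_eq_mul, ep, if_pos rfl, if_true, mul_one, one_mul,
          norm_mul, norm_one, Complex.norm_real, Real.norm_eq_abs]
        rw [_root_.abs_of_nonneg (pow_nonneg (by linarith : (0:ℝ) ≤ x) k), hx_def]
      · simp only [Pi.smul_apply, smul_eq_mul, ep, if_neg h, mul_zero, norm_zero]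
        positivity
    have hval : B b b = (((x ^ k) ^ 2 * a p : ℝ) : ℂ) := by
      rw [hb, hsmul1 _ _ _ (pg_ep p) (pg_smul _ (pg_ep p)),
        hsmul2 _ _ _ (pg_ep p) (pg_ep p), haC, Complex.conj_ofReal]
      push_cast; ring
    have hle := hC 1 1 b b one_pos one_pos (pg_smul _ (pg_ep p)) (pg_smul _ (pg_ep p)) hbb hbb
    rw [hval] at hle
    rw [Complex.norm_real, Real.norm_eq_abs, _root_.abs_of_nonneg (mul_nonneg (sq_nonneg _) (hanneg p))] at hle
    rw [_root_.abs_of_nonneg (hanneg p)]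
    nlinarith [mul_le_mul_of_nonneg_left hxk (mul_nonneg (hanneg p) (by positivity : (0:ℝ) ≤ x ^ k))]
  -- summability
  have hsummable_aux : ∀ j : ℕ, Summable (fun p : ℤ => (|(p:ℝ)|+1) ^ j * a p) := by
    intro j
    obtain ⟨D, hD⟩ := hrd (j + 2)
    apply Summable.of_nonneg_of_le (fun p => mul_nonneg (by positivity) (hanneg p)) (fun p => ?_)
      (summable_inv_sq.mul_left D)
    have hx : (1:ℝ) ≤ |(p:ℝ)| + 1 := one_le_x p
    have hx2 : (0:ℝ) < (|(p:ℝ)|+1) ^ 2 := by positivity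
    calc (|(p:ℝ)|+1) ^ j * a p
        = (|a p| * (|(p:ℝ)|+1) ^ (j+2)) / (|(p:ℝ)|+1) ^ 2 := by
          rw [_root_.abs_of_nonneg (hanneg p)]
          field_simp
          ring
      _ ≤ D / (|(p:ℝ)|+1) ^ 2 := by
          gcongr
          exact hD p
      _ = D * ((|(p:ℝ)|+1) ^ 2)⁻¹ := div_eq_mul_inv _ _
  have hsummable : ∀ b c : ℤ → ℂ, PolyGrowth b → PolyGrowth c →
      Summable (fun p => b p * (starRingEnd ℂ) (c p) * ((a p : ℝ) : ℂ)) := by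
    intro b c hb hc
    obtain ⟨m1, C1, hC1⟩ := hb
    obtain ⟨m2, C2, hC2⟩ := hc
    set m := max m1 m2 with hm
    set Cb := max C1 0 + 1 with hCb_def
    set Cc := max C2 0 + 1 with hCc_def
    have hbB : ∀ p, ‖b p‖ ≤ Cb * (|(p:ℝ)|+1) ^ m :=
      pg_up hC1 (le_max_left _ _) (by rw [hCb_def]; linarith)
    have hcB : ∀ p, ‖c p‖ ≤ Cc * (|(p:ℝ)|+1) ^ m :=
      pg_up hC2 (le_max_right _ _) (by rw [hCc_def]; linarith)
    apply Summable.of_norm_bounded (g := fun p : ℤ => (Cb * Cc) * ((|(p:ℝ)|+1) ^ (2*m) * a p))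
      ((hsummable_aux (2*m)).mul_left (Cb * Cc))
    intro p
    have hx : (1:ℝ) ≤ |(p:ℝ)| + 1 := one_le_x p
    rw [norm_mul, norm_mul, RCLike.norm_conj, Complex.norm_real, Real.norm_eq_abs,
      _root_.abs_of_nonneg (hanneg p)]
    calc ‖b p‖ * ‖c p‖ * a p
        ≤ (Cb * (|(p:ℝ)|+1) ^ m) * (Cc * (|(p:ℝ)|+1) ^ m) * a p := by
          apply mul_le_mul_of_nonneg_right _ (hanneg p)
          exact mul_le_mul (hbB p) (hcB p) (norm_nonneg _) (by positivity)
      _ = (Cb * Cc) * ((|(p:ℝ)|+1) ^ (2*m) * a p) := by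
          rw [two_mul, pow_add]; ring
  -- finite expansion
  have hexp : ∀ (b c : ℤ → ℂ), PolyGrowth b → PolyGrowth c → ∀ N : ℕ,
      B (trunc b N) (trunc c N) =
        ∑ p ∈ Finset.Icc (-(N:ℤ)) N, b p * (starRingEnd ℂ) (c p) * ((a p : ℝ) : ℂ) := by
    intro b c hb hc N
    rw [trunc_eq_sum b N, trunc_eq_sum c N,
      hsum1 _ _ _ (fun q => pg_smul _ (pg_ep q)) (pg_sum (fun q => pg_smul _ (pg_ep q)))]
    refine Finset.sum_congr rfl fun p hp => ?_
    rw [hsmul1 _ _ _ (pg_ep p) (pg_sum (fun q => pg_smul _ (pg_ep q))),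
      hsum2 _ _ _ (fun q => pg_smul _ (pg_ep q)) (pg_ep p)]
    have hinner : ∑ q ∈ Finset.Icc (-(N:ℤ)) N, B (ep p) (c q • ep q)
        = (starRingEnd ℂ) (c p) * ((a p : ℝ) : ℂ) := by
      rw [Finset.sum_eq_single p]
      · rw [hsmul2 _ _ _ (pg_ep p) (pg_ep p), haC]
      · intro q _ hne
        rw [hsmul2 _ _ _ (pg_ep p) (pg_ep q), hoff p q (Ne.symm hne), mul_zero]
      · intro hnot; exact absurd hp hnot
    rw [hinner, mul_assoc]
  -- the main formula
  have hform : ∀ b c : ℤ → ℂ, PolyGrowth b → PolyGrowth c →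
      B b c = ∑' p : ℤ, b p * (starRingEnd ℂ) (c p) * ((a p : ℝ) : ℂ) := by
    intro b c hb hc
    set f : ℤ → ℂ := fun p => b p * (starRingEnd ℂ) (c p) * ((a p : ℝ) : ℂ) with hf_def
    have hfsum : Summable f := hsummable b c hb hc
    have hT1 : Tendsto (fun N : ℕ => ∑ p ∈ Finset.Icc (-(N:ℤ)) N, f p) atTop
        (𝓝 (∑' p, f p)) := hfsum.hasSum.comp tendsto_Icc
    obtain ⟨m1, C1, hC1⟩ := hb
    obtain ⟨m2, C2, hC2⟩ := hc
    set m := max m1 m2 with hm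
    set Cb := max C1 0 + 1 with hCb_def
    set Cc := max C2 0 + 1 with hCc_def
    have hCb0 : 0 < Cb := by rw [hCb_def]; positivity
    have hCc0 : 0 < Cc := by rw [hCc_def]; positivity
    have hbB : ∀ p, ‖b p‖ ≤ Cb * (|(p:ℝ)|+1) ^ m :=
      pg_up hC1 (le_max_left _ _) (by rw [hCb_def]; linarith)
    have hcB : ∀ p, ‖c p‖ ≤ Cc * (|(p:ℝ)|+1) ^ m :=
      pg_up hC2 (le_max_right _ _) (by rw [hCc_def]; linarith)
    obtain ⟨C, hC0, hC⟩ := hbound (m + 1)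
    have hbB1 : ∀ p, ‖b p‖ ≤ Cb * (|(p:ℝ)|+1) ^ (m+1) :=
      pg_up hbB (Nat.le_succ m) (le_of_eq (max_eq_left hCb0.le))
    have hcB1 : ∀ p, ‖c p‖ ≤ Cc * (|(p:ℝ)|+1) ^ (m+1) :=
      pg_up hcB (Nat.le_succ m) (le_of_eq (max_eq_left hCc0.le))
    have key : ∀ N : ℕ, ‖B (trunc b N) (trunc c N) - B b c‖ ≤
        2 * Cb * Cc * C / ((N:ℝ) + 1) := by
      intro N
      have hN1 : (0:ℝ) < (N:ℝ) + 1 := by positivity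
      have hrest : ∀ (d : ℤ → ℂ) (Cd : ℝ), 0 < Cd → (∀ p, ‖d p‖ ≤ Cd * (|(p:ℝ)|+1) ^ m) →
          ∀ p, ‖rest d N p‖ ≤ (Cd / ((N:ℝ)+1)) * (|(p:ℝ)|+1) ^ (m+1) := by
        intro d Cd hCd hd p
        by_cases h : |p| ≤ (N:ℤ)
        · rw [rest, if_pos h, norm_zero]; positivity
        · rw [rest, if_neg h]
          have habs : (N:ℝ) + 1 ≤ |(p:ℝ)| := by
            have : (N:ℤ) + 1 ≤ |p| := by omega
            calc (N:ℝ) + 1 = (((N:ℤ) + 1 : ℤ) : ℝ) := by push_cast; ring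
              _ ≤ ((|p| : ℤ) : ℝ) := by exact_mod_cast this
              _ = |(p:ℝ)| := by push_cast; simp [Int.cast_abs]
          have hx : (1:ℝ) ≤ |(p:ℝ)| + 1 := one_le_x p
          calc ‖d p‖ ≤ Cd * (|(p:ℝ)|+1) ^ m := hd p
            _ = Cd * (|(p:ℝ)|+1) ^ m * 1 := by ring
            _ ≤ Cd * (|(p:ℝ)|+1) ^ m * ((|(p:ℝ)|+1) / ((N:ℝ)+1)) := by
                apply mul_le_mul_of_nonneg_left _ (by positivity)
                rw [le_div_iff₀ hN1]; linarith
            _ = (Cd / ((N:ℝ)+1)) * (|(p:ℝ)|+1) ^ (m+1) := by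
                rw [pow_succ]; field_simp
      have htB : ∀ p, ‖trunc b N p‖ ≤ Cb * (|(p:ℝ)|+1) ^ (m+1) :=
        fun p => (trunc_le b N p).trans (hbB1 p)
      have hpgt : PolyGrowth (trunc b N) := pg_of_le (trunc_le b N) ⟨m1, C1, hC1⟩
      have hpgrb : PolyGrowth (rest b N) := pg_of_le (rest_le b N) ⟨m1, C1, hC1⟩
      have hpgtc : PolyGrowth (trunc c N) := pg_of_le (trunc_le c N) ⟨m2, C2, hC2⟩
      have hpgrc : PolyGrowth (rest c N) := pg_of_le (rest_le c N) ⟨m2, C2, hC2⟩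
      have habc : B b c = B (trunc b N) c + B (rest b N) c := by
        conv_lhs => rw [← trunc_add_rest b N]
        exact hadd1 _ _ _ hpgt hpgrb ⟨m2, C2, hC2⟩
      have htbc : B (trunc b N) c = B (trunc b N) (trunc c N) + B (trunc b N) (rest c N) := by
        conv_lhs => rw [← trunc_add_rest c N]
        exact hadd2 _ _ _ hpgt hpgtc hpgrc
      have hid : B (trunc b N) (trunc c N) - B b c = -(B (rest b N) c) - B (trunc b N) (rest c N) := by
        rw [habc, htbc]; ring
      rw [hid]
      have h1 : ‖B (rest b N) c‖ ≤ (Cb / ((N:ℝ)+1)) * Cc * C :=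
        hC (Cb / ((N:ℝ)+1)) Cc _ _ (by positivity) hCc0 hpgrb ⟨m2, C2, hC2⟩
          (hrest b Cb hCb0 hbB) hcB1
      have h2 : ‖B (trunc b N) (rest c N)‖ ≤ Cb * (Cc / ((N:ℝ)+1)) * C :=
        hC Cb (Cc / ((N:ℝ)+1)) _ _ hCb0 (by positivity) hpgt hpgrc htB
          (hrest c Cc hCc0 hcB)
      calc ‖-(B (rest b N) c) - B (trunc b N) (rest c N)‖
          ≤ ‖-(B (rest b N) c)‖ + ‖B (trunc b N) (rest c N)‖ := norm_sub_le _ _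
        _ = ‖B (rest b N) c‖ + ‖B (trunc b N) (rest c N)‖ := by rw [norm_neg]
        _ ≤ (Cb / ((N:ℝ)+1)) * Cc * C + Cb * (Cc / ((N:ℝ)+1)) * C := add_le_add h1 h2
        _ = 2 * Cb * Cc * C / ((N:ℝ) + 1) := by field_simp; ring
    have hT0 : Tendsto (fun N : ℕ => (2 * Cb * Cc * C) / ((N:ℝ) + 1)) atTop (𝓝 0) := by
      have := tendsto_one_div_add_atTop_nhds_zero_nat.const_mul (2 * Cb * Cc * C)
      simpa [mul_one_div, div_eq_mul_inv] using this
    have hT2 : Tendsto (fun N : ℕ => B (trunc b N) (trunc c N)) atTop (𝓝 (B b c)) := by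
      rw [← tendsto_sub_nhds_zero_iff]
      exact squeeze_zero_norm key hT0
    have hT2' : Tendsto (fun N : ℕ => ∑ p ∈ Finset.Icc (-(N:ℤ)) N, f p) atTop (𝓝 (B b c)) := by
      apply hT2.congr
      intro N
      exact hexp b c ⟨m1, C1, hC1⟩ ⟨m2, C2, hC2⟩ N
    exact tendsto_nhds_unique hT2' hT1
  -- positive definiteness characterization
  have hiff : (∀ b, PolyGrowth b → b ≠ 0 → 0 < (B b b).re) ↔ ∀ p, 0 < a p := by
    constructor
    · intro h p
      have hne : ep p ≠ 0 := by
        intro h0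
        have := congrFun h0 p
        simp [ep] at this
      have := h (ep p) (pg_ep p) hne
      rwa [haC, Complex.ofReal_re] at this
    · intro h b hb hbne
      obtain ⟨p0, hp0⟩ := Function.ne_iff.mp hbne
      have hfeq : (fun p => b p * (starRingEnd ℂ) (b p) * ((a p : ℝ) : ℂ))
          = fun p => ((Complex.normSq (b p) * a p : ℝ) : ℂ) := by
        funext p
        rw [Complex.mul_conj]
        push_cast
        ring
      have hBbb : B b b = ((∑' p, Complex.normSq (b p) * a p : ℝ) : ℂ) := by
        rw [hform b b hb hb, hfeq, Complex.ofReal_tsum]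
      have hgsum : Summable (fun p => Complex.normSq (b p) * a p) := by
        have := hsummable b b hb hb
        rw [hfeq] at this
        exact Complex.summable_ofReal.mp this
      rw [hBbb, Complex.ofReal_re]
      apply Summable.tsum_pos hgsum (fun p => mul_nonneg (Complex.normSq_nonneg _) (hanneg p)) p0
      exact mul_pos (Complex.normSq_pos.mpr hp0) (h p0)
  refine ⟨a, ⟨hrd, hanneg, hsymm, hform, hiff⟩, ?_⟩
  -- uniqueness
  intro a' ⟨_, _, _, hform', _⟩
  funext p
  have h1 := hform' (ep p) (ep p) (pg_ep p) (pg_ep p)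
  have h2 : (∑' q : ℤ, ep p q * (starRingEnd ℂ) (ep p q) * ((a' q : ℝ) : ℂ)) = ((a' p : ℝ) : ℂ) := by
    rw [tsum_eq_single p]
    · simp [ep]
    · intro q hq
      simp [ep, hq]
  rw [h2, haC] at h1
  exact_mod_cast h1.symm
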